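/- Let p be a prime and let 1 ≤ m' ≤ m < n be integers. Then every value attained by the Nathanson height on m-dimensional subspaces of (ℤ/pℤ)^n is also attained on m'-dimensional subspaces; that is, {h_p(V) : V an m-dimensional subspace of (ℤ/pℤ)^n} ⊆ {h_p(W) : W an m'-dimensional subspace of (ℤ/pℤ)^n}. -/

import Mathlib

/-- Nathanson height of a subspace `V ⊆ (ℤ/pℤ)^n`. -/
noncomputable def nheight {p n : ℕ} (V : Submodule (ZMod p) (Fin n → ZMod p)) : ℕ :=
  sInf {k : ℕ | ∃ v ∈ V, v ≠ 0 ∧ k = ∑ i, (v i).val}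

lemma aux_exists_sub (p n : ℕ) [Fact p.Prime] (V : Submodule (ZMod p) (Fin n → ZMod p))
    (v : Fin n → ZMod p) (hv : v ∈ V) (hv0 : v ≠ 0) (m' : ℕ) (h1 : 1 ≤ m')
    (h2 : m' ≤ Module.finrank (ZMod p) V) :
    ∃ W : Submodule (ZMod p) (Fin n → ZMod p),
      W ≤ V ∧ v ∈ W ∧ Module.finrank (ZMod p) W = m' := by
  set x : ↥V := ⟨v, hv⟩ with hxdef
  have hx : x ≠ 0 := by
    simp only [hxdef, ne_eq, Submodule.mk_eq_zero]
    exact hv0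
  have hs : LinearIndepOn (ZMod p) id ({x} : Set ↥V) :=
    (linearIndepOn_singleton_iff _).mpr hx
  set b : Set ↥V := hs.extend (Set.subset_univ _) with hbdef
  have hb_ind : LinearIndependent (ZMod p) ((↑) : b → ↥V) :=
    hs.linearIndepOn_extend _
  have hxb : x ∈ b := hs.subset_extend _ rfl
  have basis : Module.Basis b (ZMod p) ↥V := Module.Basis.extend hs
  have hbfin : b.Finite := Set.toFinite b
  haveI : Fintype b := hbfin.fintype
  have hcard : b.ncard = Module.finrank (ZMod p) V := by
    rw [Module.finrank_eq_card_basis basis, Set.ncard_eq_toFinset_card', Set.toFinset_card]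
  have hdiff : m' - 1 ≤ (b \ {x}).ncard := by
    rw [Set.ncard_diff_singleton_of_mem hxb, hcard]
    omega
  obtain ⟨t, hts, htc⟩ := Set.exists_subset_card_eq hdiff
  have hxt : x ∉ t := fun hxt => (hts hxt).2 rfl
  have hsub : insert x t ⊆ b := Set.insert_subset hxb (hts.trans Set.diff_subset)
  have hind := LinearIndepOn.mono (v := id) (s := b) hb_ind hsub
  have htfin : (insert x t : Set ↥V).Finite := Set.toFinite _
  haveI : Fintype (insert x t : Set ↥V) := htfin.fintype
  refine ⟨(Submodule.span (ZMod p) (insert x t)).map V.subtype,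
    Submodule.map_subtype_le _ _, ⟨x, Submodule.subset_span (Set.mem_insert _ _), rfl⟩, ?_⟩
  rw [Submodule.finrank_map_subtype_eq]
  rw [finrank_span_set_eq_card hind]
  have : (insert x t : Set ↥V).ncard = m' := by
    rw [Set.ncard_insert_of_notMem hxt (t.toFinite), htc]
    omega
  rw [← this, Set.ncard_eq_toFinset_card', Set.toFinset_card]

theorem height_values_dim_monotone (p n m m' : ℕ) (hp : p.Prime)
    (h1 : 1 ≤ m') (h2 : m' ≤ m) (h3 : m < n) :
    {k : ℕ | ∃ V : Submodule (ZMod p) (Fin n → ZMod p),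
        Module.finrank (ZMod p) V = m ∧ nheight V = k} ⊆
    {k : ℕ | ∃ W : Submodule (ZMod p) (Fin n → ZMod p),
        Module.finrank (ZMod p) W = m' ∧ nheight W = k} := by
  haveI : Fact p.Prime := ⟨hp⟩
  rintro k ⟨V, hVrank, rfl⟩
  -- the defining set for V is nonempty
  have hne : ({k : ℕ | ∃ v ∈ V, v ≠ 0 ∧ k = ∑ i, (v i).val}).Nonempty := by
    have hpos : 0 < Module.finrank (ZMod p) V := by omega
    rw [Module.finrank_pos_iff_exists_ne_zero] at hpos
    obtain ⟨⟨v, hv⟩, hv0⟩ := hpos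
    exact ⟨∑ i, (v i).val, v, hv, by simpa using hv0, rfl⟩
  have hmem := Nat.sInf_mem hne
  obtain ⟨v, hvV, hv0, hvsum⟩ := hmem
  obtain ⟨W, hWV, hvW, hWrank⟩ :=
    aux_exists_sub p n V v hvV hv0 m' h1 (by rw [hVrank]; exact h2)
  refine ⟨W, hWrank, ?_⟩
  unfold nheight
  have hWle : sInf {k : ℕ | ∃ v ∈ W, v ≠ 0 ∧ k = ∑ i, (v i).val} ≤
      sInf {k : ℕ | ∃ v ∈ V, v ≠ 0 ∧ k = ∑ i, (v i).val} := by
    rw [hvsum]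
    exact Nat.sInf_le ⟨v, hvW, hv0, rfl⟩
  have hWne : ({k : ℕ | ∃ v ∈ W, v ≠ 0 ∧ k = ∑ i, (v i).val}).Nonempty :=
    ⟨∑ i, (v i).val, v, hvW, hv0, rfl⟩
  have hVle : sInf {k : ℕ | ∃ v ∈ V, v ≠ 0 ∧ k = ∑ i, (v i).val} ≤
      sInf {k : ℕ | ∃ v ∈ W, v ≠ 0 ∧ k = ∑ i, (v i).val} := by
    obtain ⟨w, hwW, hw0, hwsum⟩ := Nat.sInf_mem hWne
    rw [hwsum]
    exact Nat.sInf_le ⟨w, hWV hwW, hw0, rfl⟩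
  exact le_antisymm hWle hVle
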